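/- Laxator of the free energy loss model: let X, X', M, M', Y, Y' be finite types, ω a distribution on X × X' with ω(x,x') > 0 for all x, x', with marginals ω_X, ω_{X'}, and c : X → Dist(M × Y), d : X' → Dist(M' × Y') channels with strictly positive densities; let c' : Y → Dist(X × M) and d' : Y' → Dist(X' × M') be arbitrary channels. With p_c(y) = ∑_{x,m} ω_X(x) · c x (m,y), c†(y)(x,m) = ω_X(x) · c x (m,y)/p_c(y), and analogously p_d, d†; with the tensor channel (c ⊗ d)(x,x')((m,m'),(y,y')) = c x (m,y) · d x' (m',y'), its pushforward p_{cd}(y,y') under ω and its exact inversion (c ⊗ d)†(y,y')((x,m),(x',m')) = ω(x,x') · c x (m,y) · d x' (m',y')/p_{cd}(y,y'); and with the free energies FE_c(y) = D(c'(y), c†(y)) − log p_c(y), FE_d(y') = D(d'(y'), d†(y')) − log p_d(y'), and FE_{cd}(y,y') = D((c' ⊗ d')(y,y'), (c ⊗ d)†(y,y')) − log p_{cd}(y,y') where (c' ⊗ d')(y,y')((x,m),(x',m')) = c'(y)(x,m) · d'(y')(x',m'); then for all y, y': FE_{cd}(y,y') = FE_c(y) + FE_d(y') + λ, where λ = ∑_{x,m,x',m'}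 c'(y)(x,m) · d'(y')(x',m') · log( ω_X(x) · ω_{X'}(x') / ω(x,x') ). -/

import Mathlib

open scoped BigOperators

/-- The relative entropy (Kullback–Leibler divergence) between two distributions on a
finite type, `D(p,q) = ∑ z, p z * log (p z / q z)`. -/
noncomputable def relEnt {Z : Type*} [Fintype Z] (p q : Z → ℝ) : ℝ :=
  ∑ z, p z * Real.log (p z / q z)

/-- First marginal of a joint distribution on `X × X'`. -/
noncomputable def margL {X X' : Type*} [Fintype X'] (ω : X × X' → ℝ) (x : X) : ℝ :=
  ∑ x', ω (x, x')

/-- Second marginal of a joint distribution on `X × X'`. -/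
noncomputable def margR {X X' : Type*} [Fintype X] (ω : X × X' → ℝ) (x' : X') : ℝ :=
  ∑ x, ω (x, x')

/-- Pushforward of a prior along a coparameterized channel, discarding the
coparameter: `p_c(y) = ∑ x m, π x * c x (m, y)`. -/
noncomputable def pushCo {X M Y : Type*} [Fintype X] [Fintype M]
    (π : X → ℝ) (c : X → M × Y → ℝ) (y : Y) : ℝ :=
  ∑ x, ∑ m, π x * c x (m, y)

/-- Exact (coparameterized) Bayesian inversion: `c†(y)(x,m) = π x * c x (m,y) / p_c(y)`. -/
noncomputable def exactInv {X M Y : Type*} [Fintype X] [Fintype M]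
    (π : X → ℝ) (c : X → M × Y → ℝ) (y : Y) (xm : X × M) : ℝ :=
  π xm.1 * c xm.1 (xm.2, y) / pushCo π c y

/-- Pushforward of a joint prior `ω` along the tensor of two coparameterized channels. -/
noncomputable def pushTensor {X X' M M' Y Y' : Type*}
    [Fintype X] [Fintype X'] [Fintype M] [Fintype M']
    (ω : X × X' → ℝ) (c : X → M × Y → ℝ) (d : X' → M' × Y' → ℝ) (y : Y) (y' : Y') : ℝ :=
  ∑ x, ∑ x', ∑ m, ∑ m', ω (x, x') * c x (m, y) * d x' (m', y')


/-- Helper: splitting a constant denominator out of a relative-entropy-style sum. -/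
lemma sum_log_div_const {Z : Type*} [Fintype Z] (a b : Z → ℝ) (A : ℝ)
    (ha : ∀ z, 0 ≤ a z) (hb : ∀ z, 0 < b z) (hA : 0 < A) (ha1 : ∑ z, a z = 1) :
    ∑ z, a z * Real.log (a z / (b z / A))
      = (∑ z, a z * Real.log (a z / b z)) + Real.log A := by
  have key : ∀ z, a z * Real.log (a z / (b z / A))
      = a z * Real.log (a z / b z) + a z * Real.log A := by
    intro z
    rcases eq_or_lt_of_le (ha z) with h | h
    · simp [← h]
    · rw [div_div_eq_mul_div, ← div_mul_eq_mul_div,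
        Real.log_mul (ne_of_gt (div_pos h (hb z))) (ne_of_gt hA), mul_add]
  simp only [key]
  rw [Finset.sum_add_distrib, ← Finset.sum_mul, ha1, one_mul]

/-- **Laxator of the free energy loss model**: the free energy of the tensor system
equals the sum of the componentwise free energies (at the marginal priors) plus the
laxity term `λ = ∑ c' d' * log (ω_X ⊗ ω_{X'} / ω)`. -/
theorem free_energy_laxator
    {X X' M M' Y Y' : Type*}
    [Fintype X] [Fintype X'] [Fintype M] [Fintype M'] [Fintype Y] [Fintype Y']
    (ω : X × X' → ℝ) (c : X → M × Y → ℝ) (d : X' → M' × Y' → ℝ)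
    (c' : Y → X × M → ℝ) (d' : Y' → X' × M' → ℝ)
    (hω : ∀ p, 0 < ω p) (hω₁ : ∑ p, ω p = 1)
    (hc : ∀ x my, 0 < c x my) (hc₁ : ∀ x, ∑ my, c x my = 1)
    (hd : ∀ x' my, 0 < d x' my) (hd₁ : ∀ x', ∑ my, d x' my = 1)
    (hc'₀ : ∀ y xm, 0 ≤ c' y xm) (hc'₁ : ∀ y, ∑ xm, c' y xm = 1)
    (hd'₀ : ∀ y' xm, 0 ≤ d' y' xm) (hd'₁ : ∀ y', ∑ xm, d' y' xm = 1) :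
    ∀ (y : Y) (y' : Y'),
      (relEnt
          (fun p : (X × M) × (X' × M') => c' y p.1 * d' y' p.2)
          (fun p : (X × M) × (X' × M') =>
            ω (p.1.1, p.2.1) * c p.1.1 (p.1.2, y) * d p.2.1 (p.2.2, y')
              / pushTensor ω c d y y')
        - Real.log (pushTensor ω c d y y'))
      = (relEnt (c' y) (exactInv (margL ω) c y) - Real.log (pushCo (margL ω) c y))
        + (relEnt (d' y') (exactInv (margR ω) d y') - Real.log (pushCo (margR ω) d y'))
        + ∑ x, ∑ m, ∑ x', ∑ m',
            c' y (x, m) * d' y' (x', m')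
              * Real.log (margL ω x * margR ω x' / ω (x, x')) := by
  -- nonemptiness
  obtain ⟨⟨x0, x0'⟩, -⟩ : (Finset.univ : Finset (X × X')).Nonempty :=
    Finset.nonempty_of_sum_ne_zero (by rw [hω₁]; exact one_ne_zero)
  haveI : Nonempty X := ⟨x0⟩
  haveI : Nonempty X' := ⟨x0'⟩
  obtain ⟨⟨m0, yy0⟩, -⟩ : (Finset.univ : Finset (M × Y)).Nonempty :=
    Finset.nonempty_of_sum_ne_zero (by rw [hc₁ x0]; exact one_ne_zero)
  haveI : Nonempty M := ⟨m0⟩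
  obtain ⟨⟨m0', yy0'⟩, -⟩ : (Finset.univ : Finset (M' × Y')).Nonempty :=
    Finset.nonempty_of_sum_ne_zero (by rw [hd₁ x0']; exact one_ne_zero)
  haveI : Nonempty M' := ⟨m0'⟩
  intro y y'
  -- positivity facts
  have hmL : ∀ x, 0 < margL ω x := fun x =>
    Finset.sum_pos (fun _ _ => hω _) Finset.univ_nonempty
  have hmR : ∀ x', 0 < margR ω x' := fun x' =>
    Finset.sum_pos (fun _ _ => hω _) Finset.univ_nonempty
  have hP : 0 < pushCo (margL ω) c y :=
    Finset.sum_pos (fun x _ => Finset.sum_pos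
      (fun m _ => mul_pos (hmL x) (hc x (m, y))) Finset.univ_nonempty)
      Finset.univ_nonempty
  have hQ : 0 < pushCo (margR ω) d y' :=
    Finset.sum_pos (fun x _ => Finset.sum_pos
      (fun m _ => mul_pos (hmR x) (hd x (m, y'))) Finset.univ_nonempty)
      Finset.univ_nonempty
  have hA : 0 < pushTensor ω c d y y' :=
    Finset.sum_pos (fun x _ => Finset.sum_pos (fun x' _ => Finset.sum_pos
      (fun m _ => Finset.sum_pos (fun m' _ =>
        mul_pos (mul_pos (hω (x, x')) (hc x (m, y))) (hd x' (m', y')))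
        Finset.univ_nonempty) Finset.univ_nonempty) Finset.univ_nonempty)
      Finset.univ_nonempty
  -- total mass of the product plan
  have sum_a : ∑ p : (X × M) × (X' × M'), c' y p.1 * d' y' p.2 = 1 := by
    rw [Fintype.sum_prod_type]
    simp only [← Finset.mul_sum, hd'₁ y', mul_one, hc'₁ y]
  -- rewrite the three relEnt terms
  have h1 : relEnt
      (fun p : (X × M) × (X' × M') => c' y p.1 * d' y' p.2)
      (fun p : (X × M) × (X' × M') =>
        ω (p.1.1, p.2.1) * c p.1.1 (p.1.2, y) * d p.2.1 (p.2.2, y')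
          / pushTensor ω c d y y')
      = (∑ p : (X × M) × (X' × M'), c' y p.1 * d' y' p.2 *
          Real.log (c' y p.1 * d' y' p.2 /
            (ω (p.1.1, p.2.1) * c p.1.1 (p.1.2, y) * d p.2.1 (p.2.2, y'))))
        + Real.log (pushTensor ω c d y y') := by
    unfold relEnt
    exact sum_log_div_const _
      (fun p : (X × M) × (X' × M') =>
        ω (p.1.1, p.2.1) * c p.1.1 (p.1.2, y) * d p.2.1 (p.2.2, y'))
      _ (fun p => mul_nonneg (hc'₀ y p.1) (hd'₀ y' p.2))
      (fun p => mul_pos (mul_pos (hω _) (hc _ _)) (hd _ _)) hA sum_a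
  have h2 : relEnt (c' y) (exactInv (margL ω) c y)
      = (∑ q : X × M, c' y q * Real.log (c' y q / (margL ω q.1 * c q.1 (q.2, y))))
        + Real.log (pushCo (margL ω) c y) := by
    unfold relEnt exactInv
    exact sum_log_div_const (c' y)
      (fun q : X × M => margL ω q.1 * c q.1 (q.2, y)) _
      (hc'₀ y) (fun q => mul_pos (hmL q.1) (hc _ _)) hP (hc'₁ y)
  have h3 : relEnt (d' y') (exactInv (margR ω) d y')
      = (∑ q : X' × M', d' y' q * Real.log (d' y' q / (margR ω q.1 * d q.1 (q.2, y'))))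
        + Real.log (pushCo (margR ω) d y') := by
    unfold relEnt exactInv
    exact sum_log_div_const (d' y')
      (fun q : X' × M' => margR ω q.1 * d q.1 (q.2, y')) _
      (hd'₀ y') (fun q => mul_pos (hmR q.1) (hd _ _)) hQ (hd'₁ y')
  -- key pointwise decomposition
  have key : ∀ (q : X × M) (q' : X' × M'),
      c' y q * d' y' q' *
        Real.log (c' y q * d' y' q' /
          (ω (q.1, q'.1) * c q.1 (q.2, y) * d q'.1 (q'.2, y')))
      = d' y' q' * (c' y q * Real.log (c' y q / (margL ω q.1 * c q.1 (q.2, y))))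
        + c' y q * (d' y' q' * Real.log (d' y' q' / (margR ω q'.1 * d q'.1 (q'.2, y'))))
        + c' y q * d' y' q' * Real.log (margL ω q.1 * margR ω q'.1 / ω (q.1, q'.1)) := by
    intro q q'
    rcases eq_or_lt_of_le (hc'₀ y q) with h | h
    · simp [← h]
    rcases eq_or_lt_of_le (hd'₀ y' q') with h' | h'
    · simp [← h']
    have hw := hω (q.1, q'.1)
    have hcc := hc q.1 (q.2, y)
    have hdd := hd q'.1 (q'.2, y')
    have hL := hmL q.1
    have hR := hmR q'.1
    have hwne : ω (q.1, q'.1) ≠ 0 := ne_of_gt hw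
    have hccne : c q.1 (q.2, y) ≠ 0 := ne_of_gt hcc
    have hddne : d q'.1 (q'.2, y') ≠ 0 := ne_of_gt hdd
    have hLne : margL ω q.1 ≠ 0 := ne_of_gt hL
    have hRne : margR ω q'.1 ≠ 0 := ne_of_gt hR
    have harg : c' y q * d' y' q' /
          (ω (q.1, q'.1) * c q.1 (q.2, y) * d q'.1 (q'.2, y'))
        = (c' y q / (margL ω q.1 * c q.1 (q.2, y))) *
          ((d' y' q' / (margR ω q'.1 * d q'.1 (q'.2, y'))) *
            (margL ω q.1 * margR ω q'.1 / ω (q.1, q'.1))) := by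
      field_simp
    rw [harg,
      Real.log_mul (ne_of_gt (div_pos h (mul_pos hL hcc)))
        (ne_of_gt (mul_pos (div_pos h' (mul_pos hR hdd))
          (div_pos (mul_pos hL hR) hw))),
      Real.log_mul (ne_of_gt (div_pos h' (mul_pos hR hdd)))
        (ne_of_gt (div_pos (mul_pos hL hR) hw))]
    ring
  -- sum the decomposition
  have h4 : (∑ p : (X × M) × (X' × M'), c' y p.1 * d' y' p.2 *
        Real.log (c' y p.1 * d' y' p.2 /
          (ω (p.1.1, p.2.1) * c p.1.1 (p.1.2, y) * d p.2.1 (p.2.2, y'))))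
      = (∑ q : X × M, c' y q * Real.log (c' y q / (margL ω q.1 * c q.1 (q.2, y))))
        + (∑ q : X' × M', d' y' q * Real.log (d' y' q / (margR ω q.1 * d q.1 (q.2, y'))))
        + ∑ x, ∑ m, ∑ x', ∑ m',
            c' y (x, m) * d' y' (x', m')
              * Real.log (margL ω x * margR ω x' / ω (x, x')) := by
    rw [Fintype.sum_prod_type]
    simp only [key]
    simp only [Finset.sum_add_distrib]
    congr 1
    · congr 1
      · simp only [← Finset.sum_mul, hd'₁ y', one_mul]
      · simp only [← Finset.mul_sum]
        simp only [← Finset.sum_mul, hc'₁ y, one_mul]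
    · simp [Fintype.sum_prod_type]
  linarith [h1, h2, h3, h4]
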